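/- There is an n₀ ∈ ℕ such that for all n ≥ n₀ and all nonempty subsets X ⊆ {0,…,n−1}, there exist a prime p with p < |X|² · log₂ n and a natural number q < p such that the function h(m) = ((q·m) mod p) mod |X|² is injective on X. -/

import Mathlib

private lemma arith_hash (s m c r a b u : ℕ) (hs : 2 ≤ s) (hm : 2^20 ≤ m)
    (ha : a ≤ s) (hb25 : 8*b + 25 ≤ u) (hu : 1024 ≤ u) (hum : u*u ≤ m)
    (hr2 : r + 2 ≤ 2*s*(u+1)) (hc : 2*c = s*s - s) :
    (2*a+b+3)*(r+2) + (m+1)*c + 4 ≤ s*s*m := by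
  have hss : s ≤ s*s := Nat.le_mul_of_pos_left s (by omega)
  zify [hss] at hc ⊢
  have h0s : (0:ℤ) ≤ (s:ℤ) := by positivity
  have h0u : (0:ℤ) ≤ (u:ℤ) := by positivity
  have h0b : (0:ℤ) ≤ (b:ℤ) := by positivity
  have h0a : (0:ℤ) ≤ (a:ℤ) := by positivity
  have h0r : (0:ℤ) ≤ (r:ℤ) := by positivity
  have hsZ : (2:ℤ) ≤ (s:ℤ) := by exact_mod_cast hs
  have hmZ : (1048576:ℤ) ≤ (m:ℤ) := by exact_mod_cast hm
  have huZ : (1024:ℤ) ≤ (u:ℤ) := by exact_mod_cast hu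
  have humZ : (u:ℤ)*u ≤ (m:ℤ) := by exact_mod_cast hum
  have hb25Z : (8:ℤ)*b + 25 ≤ (u:ℤ) := by exact_mod_cast hb25
  have haZ : (a:ℤ) ≤ (s:ℤ) := by exact_mod_cast ha
  have hr2Z : (r:ℤ) + 2 ≤ 2*s*((u:ℤ)+1) := by exact_mod_cast hr2
  have hF1 : (16:ℤ)*((u:ℤ)+1) ≤ (m:ℤ) - 1 := by nlinarith
  have hF2 : (4:ℤ)*((u:ℤ)+1)*((b:ℤ)+3) ≤ (m:ℤ) - 1 := by
    have h1 : (u:ℤ)*(8*((b:ℤ)+3)) ≤ (u:ℤ)*((u:ℤ)-1) :=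
      mul_le_mul_of_nonneg_left (by linarith) h0u
    nlinarith [mul_nonneg (by linarith : (0:ℤ) ≤ (b:ℤ)+3) (by linarith : (0:ℤ) ≤ 4*(u:ℤ)-4)]
  have hT : (2*(a:ℤ)+(b:ℤ)+3)*((r:ℤ)+2) ≤ (2*(s:ℤ)+(b:ℤ)+3)*(2*(s:ℤ)*((u:ℤ)+1)) :=
    mul_le_mul (by linarith) hr2Z (by linarith) (by positivity)
  have hA : (s:ℤ)*(s:ℤ)*(16*((u:ℤ)+1)) ≤ (s:ℤ)*(s:ℤ)*((m:ℤ)-1) :=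
    mul_le_mul_of_nonneg_left hF1 (by positivity)
  have hB : (s:ℤ)*(4*((u:ℤ)+1)*((b:ℤ)+3)) ≤ (s:ℤ)*((m:ℤ)-1) :=
    mul_le_mul_of_nonneg_left hF2 h0s
  have hss4 : (4:ℤ) ≤ (s:ℤ)*(s:ℤ) := by nlinarith [mul_le_mul hsZ hsZ (by norm_num : (0:ℤ) ≤ 2) (by linarith : (0:ℤ) ≤ (s:ℤ))]
  have h4 : (4:ℤ)*((m:ℤ)-1) ≤ (s:ℤ)*(s:ℤ)*((m:ℤ)-1) :=
    mul_le_mul_of_nonneg_right hss4 (by linarith)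
  have hmc : ((m:ℤ)+1)*(2*(c:ℤ)) = ((m:ℤ)+1)*((s:ℤ)*(s:ℤ) - (s:ℤ)) := by rw [hc]
  linarith [hT, hA, hB, h4, hmc]


private lemma exists_sep_prime (B D : ℕ) (hB : 8 ≤ B) (hD : 0 < D)
    (hsize : (2*B)^(Nat.sqrt (2*B) + 2) * D < 4 ^ B) :
    ∃ p, p.Prime ∧ Nat.sqrt (2*B) < p ∧ p ≤ 2*B ∧ ¬ p ∣ D := by
  by_contra hcon
  push_neg at hcon
  set r := Nat.sqrt (2*B) with hr
  set N := Nat.centralBinom B with hN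
  have hNfact : (∏ p ∈ Finset.range (2*B+1), p ^ N.factorization p) = N :=
    Nat.prod_pow_factorization_centralBinom B
  rw [← Finset.prod_filter_mul_prod_filter_not (Finset.range (2*B+1)) (fun p => p ≤ r)] at hNfact
  have hsmall : (∏ p ∈ (Finset.range (2*B+1)).filter (fun p => p ≤ r), p ^ N.factorization p)
      ≤ (2*B)^(r+1) := by
    have h1 : ∀ p ∈ (Finset.range (2*B+1)).filter (fun p => p ≤ r),
        p ^ N.factorization p ≤ 2*B := fun p _ => Nat.pow_factorization_choose_le (by omega)
    calc (∏ p ∈ (Finset.range (2*B+1)).filter (fun p => p ≤ r), p ^ N.factorization p)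
        ≤ ∏ _p ∈ (Finset.range (2*B+1)).filter (fun p => p ≤ r), (2*B) :=
          Finset.prod_le_prod' h1
      _ = (2*B)^(((Finset.range (2*B+1)).filter (fun p => p ≤ r)).card) := by
          rw [Finset.prod_const]
      _ ≤ (2*B)^(r+1) := by
          apply Nat.pow_le_pow_right (by omega)
          calc ((Finset.range (2*B+1)).filter (fun p => p ≤ r)).card
              ≤ (Finset.range (r+1)).card := Finset.card_le_card (by
                intro p hp
                rw [Finset.mem_filter] at hp
                exact Finset.mem_range.2 (by omega))
            _ = r + 1 := Finset.card_range _
  set Lg := (Finset.range (2*B+1)).filter (fun p => ¬ p ≤ r) with hLg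
  set Q := Lg.filter (fun p => N.factorization p ≠ 0) with hQ
  have hprodQ : (∏ p ∈ Q, p ^ N.factorization p) = ∏ p ∈ Lg, p ^ N.factorization p :=
    Finset.prod_filter_of_ne (fun p _ hne h0 => hne (by rw [h0, pow_zero]))
  have hQprime : ∀ p ∈ Q, p.Prime := by
    intro p hp
    rw [hQ, Finset.mem_filter] at hp
    by_contra hnp
    exact hp.2 (Nat.factorization_eq_zero_of_not_prime N hnp)
  have hQdvd : ∀ p ∈ Q, p ∣ D := by
    intro p hp
    have hprime := hQprime p hp
    rw [hQ, Finset.mem_filter, hLg, Finset.mem_filter, Finset.mem_range] at hp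
    exact hcon p hprime (by omega) (by omega)
  have hQ1 : ∀ p ∈ Q, p ^ N.factorization p ≤ p := by
    intro p hp
    have hpp := hQprime p hp
    rw [hQ, Finset.mem_filter, hLg, Finset.mem_filter] at hp
    have hrp : r < p := by omega
    have h1 : N.factorization p ≤ 1 := Nat.factorization_choose_le_one (by
      calc 2*B < (r+1)^2 := by
            have := Nat.lt_succ_sqrt' (2*B)
            simpa [hr] using this
        _ ≤ p^2 := Nat.pow_le_pow_left (by omega) 2)
    calc p ^ N.factorization p ≤ p ^ 1 := Nat.pow_le_pow_right hpp.pos h1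
      _ = p := pow_one p
  have hlarge : (∏ p ∈ Lg, p ^ N.factorization p) ≤ D := by
    rw [← hprodQ]
    refine le_trans (Finset.prod_le_prod' hQ1) (Nat.le_of_dvd hD ?_)
    exact Finset.prod_primes_dvd D (fun p hp => (hQprime p hp).prime) hQdvd
  have h4B : 4^B ≤ 2*B*N := Nat.four_pow_le_two_mul_self_mul_centralBinom B (by omega)
  have hfinal : 4^B ≤ (2*B)^(r+2) * D := by
    calc 4^B ≤ 2*B*N := h4B
      _ = 2*B * ((∏ p ∈ (Finset.range (2*B+1)).filter (fun p => p ≤ r), p ^ N.factorization p)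
            * (∏ p ∈ Lg, p ^ N.factorization p)) := by rw [hNfact]
      _ ≤ 2*B * ((2*B)^(r+1) * D) := by
          exact Nat.mul_le_mul_left _ (Nat.mul_le_mul hsmall hlarge)
      _ = (2*B)^(r+2) * D := by ring
  exact absurd hsize (not_lt.2 hfinal)


private lemma fks_exists_q {p : ℕ} (hp : p.Prime) (hp3 : 3 ≤ p) (X : Finset ℕ)
    (hs : 2 ≤ X.card)
    (hZ : ∀ x ∈ X, ∀ y ∈ X, x ≠ y → (x : ZMod p) ≠ (y : ZMod p)) :
    ∃ q, q < p ∧ Set.InjOn (fun m => (q * m % p) % X.card ^ 2) ↑X := by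
  classical
  haveI : Fact p.Prime := ⟨hp⟩
  set s := X.card with hsdef
  set t := s^2 with htdef
  have ht0 : 0 < t := by positivity
  have hp0 : 0 < p := hp.pos
  set K := (p-1)/t with hK
  have hcast : ∀ q x : ℕ, ((q * x % p : ℕ) : ZMod p) = (q : ZMod p) * (x : ZMod p) := by
    intro q x
    have h1 : ((q * x % p : ℕ) : ZMod p) = ((q*x : ℕ) : ZMod p) :=
      (ZMod.natCast_eq_natCast_iff _ _ _).2 (Nat.mod_modEq _ _)
    rw [h1]; push_cast; ring
  have hpair : ∀ z ∈ X.offDiag,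
      ((Finset.Icc 1 (p-1)).filter
        (fun q => (q * z.1 % p) % t = (q * z.2 % p) % t ∧ q * z.2 % p < q * z.1 % p)).card ≤ K := by
    intro z hz
    obtain ⟨hx, hy, hne⟩ := Finset.mem_offDiag.1 hz
    have hxyZ : (z.1 : ZMod p) ≠ (z.2 : ZMod p) := hZ z.1 hx z.2 hy hne
    have hKcard : (Finset.Icc 1 K).card = K := by rw [Nat.card_Icc]; exact Nat.add_sub_cancel K 1
    rw [← hKcard]
    apply Finset.card_le_card_of_injOn (fun q => (q * z.1 % p - q * z.2 % p) / t)
    · intro q hq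
      rw [Finset.mem_coe, Finset.mem_filter, Finset.mem_Icc] at hq
      obtain ⟨hq1, heq, hlt⟩ := hq
      have hdvd : t ∣ q * z.1 % p - q * z.2 % p := (Nat.modEq_iff_dvd' hlt.le).1 heq.symm
      have hd1 : 0 < q * z.1 % p - q * z.2 % p := by omega
      have hdp : q * z.1 % p - q * z.2 % p ≤ p - 1 := by
        have := Nat.mod_lt (q*z.1) hp0
        omega
      refine Finset.mem_Icc.2 ⟨(Nat.one_le_div_iff ht0).2 (Nat.le_of_dvd hd1 hdvd), ?_⟩
      exact Nat.div_le_div_right hdp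
    · intro q1 hq1 q2 hq2 hfeq
      simp only [Finset.coe_filter, Set.mem_setOf_eq, Finset.mem_Icc] at hq1 hq2
      obtain ⟨⟨hq1a, hq1b⟩, heq1, hlt1⟩ := hq1
      obtain ⟨⟨hq2a, hq2b⟩, heq2, hlt2⟩ := hq2
      have hdvd1 : t ∣ q1 * z.1 % p - q1 * z.2 % p := (Nat.modEq_iff_dvd' hlt1.le).1 heq1.symm
      have hdvd2 : t ∣ q2 * z.1 % p - q2 * z.2 % p := (Nat.modEq_iff_dvd' hlt2.le).1 heq2.symm
      have hd : q1 * z.1 % p - q1 * z.2 % p = q2 * z.1 % p - q2 * z.2 % p := by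
        rw [← Nat.div_mul_cancel hdvd1, ← Nat.div_mul_cancel hdvd2]
        simp only at hfeq
        rw [hfeq]
      have hcast1 : ((q1 * z.1 % p - q1 * z.2 % p : ℕ) : ZMod p)
          = (q1 : ZMod p) * ((z.1 : ZMod p) - (z.2 : ZMod p)) := by
        rw [Nat.cast_sub hlt1.le, hcast, hcast]; ring
      have hcast2 : ((q2 * z.1 % p - q2 * z.2 % p : ℕ) : ZMod p)
          = (q2 : ZMod p) * ((z.1 : ZMod p) - (z.2 : ZMod p)) := by
        rw [Nat.cast_sub hlt2.le, hcast, hcast]; ring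
      have heqZ : (q1 : ZMod p) * ((z.1 : ZMod p) - (z.2 : ZMod p))
          = (q2 : ZMod p) * ((z.1 : ZMod p) - (z.2 : ZMod p)) := by
        rw [← hcast1, ← hcast2, hd]
      have hq12 : (q1 : ZMod p) = (q2 : ZMod p) :=
        mul_right_cancel₀ (sub_ne_zero.2 hxyZ) heqZ
      have h1 : q1 % p = q2 % p := (ZMod.natCast_eq_natCast_iff _ _ _).1 hq12
      rw [Nat.mod_eq_of_lt (by omega), Nat.mod_eq_of_lt (by omega)] at h1
      exact h1
  set Qbad := (Finset.Icc 1 (p-1)).filter (fun q => ∃ z ∈ X.offDiag,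
      (q * z.1 % p) % t = (q * z.2 % p) % t ∧ q * z.2 % p < q * z.1 % p) with hQbad
  have hsub : Qbad ⊆ X.offDiag.biUnion (fun z => (Finset.Icc 1 (p-1)).filter
      (fun q => (q * z.1 % p) % t = (q * z.2 % p) % t ∧ q * z.2 % p < q * z.1 % p)) := by
    intro q hq
    rw [hQbad, Finset.mem_filter] at hq
    obtain ⟨hq1, z, hz, hcond⟩ := hq
    exact Finset.mem_biUnion.2 ⟨z, hz, Finset.mem_filter.2 ⟨hq1, hcond⟩⟩
  have hss : s ≤ s*s := Nat.le_mul_of_pos_left s (by omega)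
  have hcardQ : Qbad.card ≤ (s*s - s) * K := by
    calc Qbad.card ≤ _ := Finset.card_le_card hsub
      _ ≤ ∑ z ∈ X.offDiag, ((Finset.Icc 1 (p-1)).filter
          (fun q => (q * z.1 % p) % t = (q * z.2 % p) % t ∧ q * z.2 % p < q * z.1 % p)).card :=
        Finset.card_biUnion_le
      _ ≤ ∑ _z ∈ X.offDiag, K := Finset.sum_le_sum hpair
      _ = X.offDiag.card * K := by rw [Finset.sum_const, smul_eq_mul]
      _ = (s*s - s) * K := by rw [Finset.offDiag_card]
  have hKt : K * t ≤ p - 1 := Nat.div_mul_le_self _ _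
  have hlt : Qbad.card < p - 1 := by
    rcases Nat.eq_zero_or_pos K with h0 | h0
    · rw [h0, Nat.mul_zero] at hcardQ
      omega
    · have h2 : 2 ≤ s * K := le_trans (by omega) (Nat.mul_le_mul hs h0)
      have h3 : (s*s)*K ≤ p - 1 := by
        calc (s*s)*K = K * t := by rw [htdef, sq, mul_comm]
          _ ≤ p - 1 := hKt
      have h5 : (s*s - s)*K + s*K = (s*s)*K := by
        rw [← Nat.add_mul, Nat.sub_add_cancel hss]
      omega
  have hnotsub : ¬ (Finset.Icc 1 (p-1) ⊆ Qbad) := fun h =>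
    absurd (Finset.card_le_card h) (by rw [Nat.card_Icc]; omega)
  obtain ⟨q, hqIcc, hqbad⟩ := Finset.not_subset.1 hnotsub
  rw [Finset.mem_Icc] at hqIcc
  refine ⟨q, by omega, ?_⟩
  intro x hx y hy hxy
  by_contra hne
  have hxX : x ∈ X := hx
  have hyX : y ∈ X := hy
  have hmodne : q * x % p ≠ q * y % p := by
    intro h
    have h1 := congrArg (fun k : ℕ => (k : ZMod p)) h
    rw [hcast, hcast] at h1
    have hq0 : (q : ZMod p) ≠ 0 := by
      rw [Ne, ZMod.natCast_eq_zero_iff]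
      intro hd
      have := Nat.le_of_dvd (by omega) hd
      omega
    exact hZ x hxX y hyX hne (mul_left_cancel₀ hq0 h1)
  have hq' : ∀ z ∈ X.offDiag,
      ¬((q * z.1 % p) % t = (q * z.2 % p) % t ∧ q * z.2 % p < q * z.1 % p) := by
    intro z hz hcond
    exact hqbad (by
      rw [hQbad, Finset.mem_filter]
      exact ⟨Finset.mem_Icc.2 hqIcc, z, hz, hcond⟩)
  have hmem1 : (x, y) ∈ X.offDiag := Finset.mem_offDiag.2 ⟨hxX, hyX, hne⟩
  have hmem2 : (y, x) ∈ X.offDiag := Finset.mem_offDiag.2 ⟨hyX, hxX, Ne.symm hne⟩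
  rcases Nat.lt_or_ge (q * y % p) (q * x % p) with h | h
  · exact hq' _ hmem1 ⟨hxy, h⟩
  · exact hq' _ hmem2 ⟨hxy.symm, lt_of_le_of_ne h hmodne⟩


private lemma card_pairs (X : Finset ℕ) :
    2 * ((X.offDiag.filter (fun z => z.1 < z.2)).card) = X.card * X.card - X.card := by
  classical
  have h1 : (X.offDiag.filter (fun z => z.1 < z.2)).card
      = (X.offDiag.filter (fun z => ¬ z.1 < z.2)).card := by
    apply Finset.card_bij (fun z _ => (z.2, z.1))
    · intro z hz
      rw [Finset.mem_filter, Finset.mem_offDiag] at hz ⊢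
      obtain ⟨⟨ha, hb, hc⟩, hd⟩ := hz
      exact ⟨⟨hb, ha, Ne.symm hc⟩, by omega⟩
    · intro z1 h1 z2 h2 heq
      have e1 := congrArg Prod.fst heq
      have e2 := congrArg Prod.snd heq
      simp only at e1 e2
      exact Prod.ext e2 e1
    · intro z hz
      rw [Finset.mem_filter, Finset.mem_offDiag] at hz
      obtain ⟨⟨ha, hb, hc⟩, hd⟩ := hz
      refine ⟨(z.2, z.1), ?_, rfl⟩
      rw [Finset.mem_filter, Finset.mem_offDiag]
      refine ⟨⟨hb, ha, Ne.symm hc⟩, ?_⟩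
      simp only
      omega
  have h2 := Finset.card_filter_add_card_filter_not
    (s := X.offDiag) (p := fun z => z.1 < z.2)
  rw [Finset.offDiag_card] at h2
  omega
/-- Universal hashing: for all large enough n and all nonempty X ⊆ {0,…,n−1}
there are a prime p < |X|²·log₂ n and q < p such that
m ↦ ((q·m) mod p) mod |X|² is injective on X. -/
theorem stmt_6 : ∃ n₀ : ℕ, ∀ n : ℕ, n₀ ≤ n → ∀ X : Finset ℕ, X.Nonempty →
    (∀ x ∈ X, x < n) →
    ∃ p q : ℕ, p.Prime ∧ (p : ℝ) < (X.card : ℝ) ^ 2 * Real.logb 2 n ∧ q < p ∧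
      Set.InjOn (fun m => (q * m % p) % X.card ^ 2) ↑X := by
  classical
  use 2^(2^20)
  intro n hn X hX hXn
  have hnpos : 0 < n := lt_of_lt_of_le (by positivity) hn
  have hn0 : n ≠ 0 := hnpos.ne'
  set m := Nat.log 2 n with hmdef
  have hm20 : 2^20 ≤ m := (Nat.le_log_iff_pow_le (by norm_num) hn0).2 hn
  have hlogb : (m : ℝ) ≤ Real.logb 2 n := by
    have h1 : (2:ℝ)^m ≤ (n:ℝ) := by exact_mod_cast Nat.pow_log_le_self 2 hn0
    have h2 : Real.logb 2 ((2:ℝ)^m) ≤ Real.logb 2 n :=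
      Real.logb_le_logb_of_le (by norm_num) (by positivity) h1
    rwa [Real.logb_pow, Real.logb_self_eq_one (by norm_num), mul_one] at h2
  rcases eq_or_lt_of_le (Nat.one_le_iff_ne_zero.2 hX.card_pos.ne') with h1 | hs2
  · -- X.card = 1
    obtain ⟨x0, hx0⟩ := Finset.card_eq_one.1 h1.symm
    refine ⟨2, 1, Nat.prime_two, ?_, one_lt_two, ?_⟩
    · have hm2 : (2:ℝ) < (m:ℝ) := by
        have : (2:ℕ) < 2^20 := by norm_num
        exact_mod_cast lt_of_lt_of_le this hm20
      have : (X.card : ℝ) = 1 := by rw [← h1]; norm_num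
      rw [this]
      calc (2:ℝ) < (m:ℝ) := hm2
        _ ≤ Real.logb 2 n := hlogb
        _ = 1^2 * Real.logb 2 n := by ring
    · rw [hx0]
      simp [Set.InjOn]
  · -- 2 ≤ X.card
    set s := X.card with hsdef
    have hs : 2 ≤ s := hs2
    set a := Nat.log 2 s with hadef
    set b := Nat.log 2 m with hbdef
    set u := Nat.sqrt m with hudef
    set P := X.offDiag.filter (fun z => z.1 < z.2) with hPdef
    set c := P.card with hcdef
    have hcc : 2 * c = s*s - s := card_pairs X
    set D := ∏ z ∈ P, (z.2 - z.1) with hDdef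
    have hD0 : 0 < D := Finset.prod_pos (fun z hz => by
      rw [hPdef, Finset.mem_filter] at hz
      omega)
    set M := s*s*m with hMdef
    set B := M/2 - 1 with hBdef
    have hM : 2^22 ≤ M := by
      have h4 : 4 ≤ s*s := Nat.mul_le_mul hs hs
      calc (2:ℕ)^22 = 4 * 2^20 := by norm_num
        _ ≤ s*s*m := Nat.mul_le_mul h4 hm20
    have h2B1 : 2*B + 2 ≤ M := by omega
    have h2B2 : M ≤ 2*B + 3 := by omega
    -- bounds for arith
    have ham : a ≤ s := (Nat.log_lt_self 2 (by omega)).le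
    have hum : u*u ≤ m := Nat.sqrt_le m
    have hu1024 : 1024 ≤ u := Nat.le_sqrt.2 (by
      calc (1024:ℕ)*1024 = 2^20 := by norm_num
        _ ≤ m := hm20)
    have hb25 : 8*b + 25 ≤ u := by
      have hm0 : m ≠ 0 := by omega
      have hb20 : 20 ≤ b := (Nat.le_log_iff_pow_le (by norm_num) hm0).2 hm20
      have hk : 2^(b/2) ≤ u := Nat.le_sqrt.2 (by
        calc 2^(b/2) * 2^(b/2) = 2^(b/2 + b/2) := (pow_add 2 _ _).symm
          _ ≤ 2^b := Nat.pow_le_pow_right (by norm_num) (by omega)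
          _ ≤ m := Nat.pow_log_le_self 2 hm0)
      have h2k : 2^(b/2) = 1024 * 2^(b/2-10) := by
        rw [show (1024:ℕ) = 2^10 from rfl, ← pow_add]
        congr 1
        omega
      have h2k2 : b/2 - 10 < 2^(b/2-10) := Nat.lt_two_pow_self
      generalize hA2 : 2^(b/2-10) = A2 at h2k h2k2
      generalize hA1 : 2^(b/2) = A1 at h2k hk
      omega
    have hr2 : Nat.sqrt (2*B) + 2 ≤ 2*s*(u+1) := by
      have h1 : Nat.sqrt (2*B) ≤ Nat.sqrt M := Nat.sqrt_le_sqrt (by omega)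
      have h2 : Nat.sqrt M < s*(u+1) := by
        rw [Nat.sqrt_lt]
        calc M = s*s*m := hMdef
          _ < s*s*((u+1)*(u+1)) :=
            mul_lt_mul_of_pos_left (Nat.lt_succ_sqrt m) (by positivity)
          _ = (s*(u+1)) * (s*(u+1)) := by ring
      calc Nat.sqrt (2*B) + 2 ≤ s*(u+1) + 1 := by omega
        _ ≤ 2*(s*(u+1)) := by
            have h3 : 0 < s*(u+1) := Nat.mul_pos (by omega) (by omega)
            omega
        _ = 2*s*(u+1) := by ring
    have harith := arith_hash s m c (Nat.sqrt (2*B)) a b u hs hm20 ham hb25 hu1024 hum hr2 hcc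
    have hsize : (2*B)^(Nat.sqrt (2*B)+2) * D < 4^B := by
      have hDle : D ≤ 2^((m+1)*c) := by
        calc D ≤ (2^(m+1))^c := Finset.prod_le_pow_card _ _ _ (fun z hz => by
            rw [hPdef, Finset.mem_filter, Finset.mem_offDiag] at hz
            have hz2 : z.2 < n := hXn _ hz.1.2.1
            have hn2 : n < 2^(m+1) := Nat.lt_pow_succ_log_self (by norm_num) n
            omega)
          _ = 2^((m+1)*c) := by rw [← pow_mul]
      have h2B : 2*B ≤ 2^(2*a+b+3) := by
        have h1 : s < 2^(a+1) := Nat.lt_pow_succ_log_self (by norm_num) s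
        have h2 : m < 2^(b+1) := Nat.lt_pow_succ_log_self (by norm_num) m
        have h3 : s*s*m ≤ 2^(a+1) * 2^(a+1) * 2^(b+1) :=
          Nat.mul_le_mul (Nat.mul_le_mul h1.le h1.le) h2.le
        have h4 : 2^(a+1) * 2^(a+1) * 2^(b+1) = 2^(2*a+b+3) := by
          rw [← pow_add, ← pow_add]
          congr 1
          omega
        omega
      calc (2*B)^(Nat.sqrt (2*B)+2) * D
          ≤ (2^(2*a+b+3))^(Nat.sqrt (2*B)+2) * 2^((m+1)*c) :=
            Nat.mul_le_mul (Nat.pow_le_pow_left h2B _) hDle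
        _ = 2^((2*a+b+3)*(Nat.sqrt (2*B)+2) + (m+1)*c) := by rw [← pow_mul, ← pow_add]
        _ < 2^(2*B) := Nat.pow_lt_pow_right (by norm_num) (by omega)
        _ = 4^B := by rw [show (4:ℕ) = 2^2 from rfl, ← pow_mul]
    obtain ⟨p, hpp, hrp, hp2B, hpD⟩ := exists_sep_prime B D (by omega) hD0 hsize
    have hp3 : 3 ≤ p := by
      have h4 : 4 ≤ Nat.sqrt (2*B) := Nat.le_sqrt.2 (by omega)
      omega
    have hZ : ∀ x ∈ X, ∀ y ∈ X, x ≠ y → (x : ZMod p) ≠ (y : ZMod p) := by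
      intro x hx y hy hne heq
      rcases Nat.lt_or_ge x y with hlt | hge
      · apply hpD
        rw [hDdef]
        have hdvd : p ∣ y - x :=
          (Nat.modEq_iff_dvd' hlt.le).1 ((ZMod.natCast_eq_natCast_iff _ _ _).1 heq)
        refine hdvd.trans (Finset.dvd_prod_of_mem (fun z : ℕ × ℕ => z.2 - z.1) (a := (x, y)) ?_)
        rw [hPdef, Finset.mem_filter, Finset.mem_offDiag]
        exact ⟨⟨hx, hy, hne⟩, hlt⟩
      · have hlt : y < x := by omega
        apply hpD
        have hdvd : p ∣ x - y :=
          (Nat.modEq_iff_dvd' hlt.le).1 ((ZMod.natCast_eq_natCast_iff _ _ _).1 heq.symm)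
        refine hdvd.trans (Finset.dvd_prod_of_mem (fun z : ℕ × ℕ => z.2 - z.1) (a := (y, x)) ?_)
        rw [hPdef, Finset.mem_filter, Finset.mem_offDiag]
        exact ⟨⟨hy, hx, Ne.symm hne⟩, hlt⟩
    obtain ⟨q, hqp, hinj⟩ := fks_exists_q hpp hp3 X hs hZ
    refine ⟨p, q, hpp, ?_, hqp, hinj⟩
    have h2 : 2*B < s*s*m := by omega
    have hps : p ≤ 2*B := hp2B
    calc (p:ℝ) ≤ ((2*B : ℕ) : ℝ) := by exact_mod_cast hps
      _ < (s:ℝ)^2 * (m:ℝ) := by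
          calc ((2*B:ℕ):ℝ) < ((s*s*m : ℕ):ℝ) := by exact_mod_cast h2
            _ = (s:ℝ)^2 * (m:ℝ) := by push_cast; ring
      _ ≤ (s:ℝ)^2 * Real.logb 2 n := mul_le_mul_of_nonneg_left hlogb (by positivity)
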